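/- Let L_1,...,L_k be nonzero operators in K[∂;δ] with orders r_1,...,r_k, and let n ≥ ord(lclm(L_1,...,L_k)). If (u_1,...,u_k,u) is a nonzero vector in the left kernel of M_n, where u_i ∈ K^{n+1−r_i} and u ∈ K^{n+1}, then u is nonzero and φ_n^{-1}(u) is a common left multiple of L_1,...,L_k with left cofactors φ_{n−r_i}^{-1}(u_i). -/

import Mathlib

/-
Setting: a differential field `(K, δ)` (δ additive and Leibniz), and the ring
`A = K[∂;δ]` of linear differential operators, axiomatised as follows:
a ring `A`, a ring embedding `ι : K →+* A`, an element `D = ∂` satisfying the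
commutation rule `∂ a = a ∂ + δ(a)`, together with the fact that every element
of `A` is uniquely of the form `Σ ι(a_i) ∂^i` (the bijection `e`).
-/

noncomputable section

variable {K A : Type*}

/-- Order of a differential operator, read off from its coefficient expansion
(`e.symm x` is the finitely supported family of coefficients of `x` w.r.t. the powers `∂^i`). -/
def ordOf [Zero K] (e : (ℕ →₀ K) ≃ A) (x : A) : ℕ :=
  (e.symm x).support.sup id

/-- `φ_n` : the row vector `(a_n, a_{n-1}, ..., a_0)` of an operator of order `≤ n`. -/
def phiV [Zero K] (e : (ℕ →₀ K) ≃ A) (n : ℕ) (x : A) : Fin (n + 1) → K :=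
  fun j => e.symm x (n - (j : ℕ))

/-- Inverse of `φ_n` : the operator with coefficient vector `(a_n, ..., a_0)`. -/
def phiInv [AddCommMonoid K] (e : (ℕ →₀ K) ≃ A) (n : ℕ) (v : Fin (n + 1) → K) : A :=
  e (∑ j : Fin (n + 1), Finsupp.single (n - (j : ℕ)) (v j))

/-- The Sylvester-type matrix `S_n(P)` of an operator `P` of order `m`:
rows are `φ_n(∂^{n-m} P), ..., φ_n(P)`. -/
def Syl [Zero K] [Monoid A] (e : (ℕ →₀ K) ≃ A) (D : A) (n m : ℕ) (P : A) :
    Matrix (Fin (n - m + 1)) (Fin (n + 1)) K :=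
  Matrix.of fun i j => phiV e n (D ^ (n - m - (i : ℕ)) * P) j

/-- The block matrix `M_n` with diagonal blocks `S_n(L_i)` and a last block row
of negated identity matrices `S_n(-1)`. -/
def Mmat [Field K] [Ring A] (e : (ℕ →₀ K) ≃ A) (D : A) {k : ℕ}
    (L : Fin k → A) (r : Fin k → ℕ) (n : ℕ) :
    Matrix ((Σ i : Fin k, Fin (n - r i + 1)) ⊕ Fin (n + 1)) (Fin k × Fin (n + 1)) K :=
  Matrix.of fun row col =>
    match row with
    | Sum.inl ⟨i, a⟩ => if i = col.1 then Syl e D n (r i) (L i) a col.2 else 0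
    | Sum.inr a => if (a : ℕ) = (col.2 : ℕ) then -1 else 0

/-- `M` is a (nonzero) common left multiple of the family `L`. -/
def IsCLM [Ring A] {k : ℕ} (L : Fin k → A) (M : A) : Prop :=
  M ≠ 0 ∧ ∀ i, ∃ Q, M = Q * L i

/-- `M` is a least common left multiple of the family `L`: a common left multiple
of minimal order. -/
def IsLCLM [Field K] [Ring A] (e : (ℕ →₀ K) ≃ A) {k : ℕ} (L : Fin k → A) (M : A) : Prop :=
  IsCLM L M ∧ ∀ M', IsCLM L M' → ordOf e M ≤ ordOf e M'

end

set_option linter.unusedSectionVars false in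
section
variable {K A : Type*}
section lems
variable [Field K] [Ring A]

theorem e_zero (ι : K →+* A) (D : A) (e : (ℕ →₀ K) ≃ A)
    (he : ∀ f : ℕ →₀ K, e f = f.sum fun i a => ι a * D ^ i) : e 0 = 0 := by
  rw [he]; simp

theorem symm_zero (ι : K →+* A) (D : A) (e : (ℕ →₀ K) ≃ A)
    (he : ∀ f : ℕ →₀ K, e f = f.sum fun i a => ι a * D ^ i) : e.symm 0 = 0 :=
  e.injective (by rw [Equiv.apply_symm_apply, e_zero ι D e he])

theorem e_add (ι : K →+* A) (D : A) (e : (ℕ →₀ K) ≃ A)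
    (he : ∀ f : ℕ →₀ K, e f = f.sum fun i a => ι a * D ^ i)
    (f g : ℕ →₀ K) : e (f + g) = e f + e g := by
  rw [he, he, he]
  exact Finsupp.sum_add_index' (fun a => by simp) (fun a b c => by simp [add_mul])

theorem e_sum (ι : K →+* A) (D : A) (e : (ℕ →₀ K) ≃ A)
    (he : ∀ f : ℕ →₀ K, e f = f.sum fun i a => ι a * D ^ i)
    {α : Type*} (s : Finset α) (f : α → (ℕ →₀ K)) :
    e (∑ x ∈ s, f x) = ∑ x ∈ s, e (f x) := by
  classical
  induction s using Finset.induction with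
  | empty => simpa using e_zero ι D e he
  | insert _ _ h ih => rw [Finset.sum_insert h, Finset.sum_insert h, e_add ι D e he, ih]

theorem e_single (ι : K →+* A) (D : A) (e : (ℕ →₀ K) ≃ A)
    (he : ∀ f : ℕ →₀ K, e f = f.sum fun i a => ι a * D ^ i)
    (i : ℕ) (a : K) : e (Finsupp.single i a) = ι a * D ^ i := by
  rw [he, Finsupp.sum_single_index]; simp

theorem e_smul (ι : K →+* A) (D : A) (e : (ℕ →₀ K) ≃ A)
    (he : ∀ f : ℕ →₀ K, e f = f.sum fun i a => ι a * D ^ i)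
    (a : K) (f : ℕ →₀ K) : e (a • f) = ι a * e f := by
  rw [he, he, Finsupp.sum_smul_index' (fun i => by simp), Finsupp.mul_sum]
  simp [smul_eq_mul, map_mul, mul_assoc]

theorem e_expand (ι : K →+* A) (D : A) (e : (ℕ →₀ K) ≃ A)
    (he : ∀ f : ℕ →₀ K, e f = f.sum fun i a => ι a * D ^ i) (x : A) :
    x = ∑ i ∈ (e.symm x).support, ι (e.symm x i) * D ^ i := by
  conv_lhs => rw [← e.apply_symm_apply x, he]
  rfl

theorem symm_D_mul (δ : K →+ K) (ι : K →+* A) (D : A) (e : (ℕ →₀ K) ≃ A)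
    (he : ∀ f : ℕ →₀ K, e f = f.sum fun i a => ι a * D ^ i)
    (hcomm : ∀ a : K, D * ι a = ι a * D + ι (δ a)) (x : A) :
    e.symm (D * x) = Finsupp.mapDomain Nat.succ (e.symm x) +
      Finsupp.mapRange δ δ.map_zero (e.symm x) := by
  apply e.injective
  rw [Equiv.apply_symm_apply, e_add ι D e he]
  set f := e.symm x with hf
  have hx : x = e f := (e.apply_symm_apply x).symm
  rw [hx, he, Finsupp.mul_sum]
  rw [he (Finsupp.mapDomain Nat.succ f), he (Finsupp.mapRange δ δ.map_zero f)]
  rw [Finsupp.sum_mapDomain_index (fun b => by simp) (fun b m₁ m₂ => by simp [add_mul])]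
  rw [Finsupp.sum_mapRange_index (fun a => by simp)]
  rw [← Finsupp.sum_add]
  apply Finsupp.sum_congr
  intro i _
  rw [← mul_assoc, hcomm, add_mul, mul_assoc, ← pow_succ']

theorem bnd_step (δ : K →+ K) (ι : K →+* A) (D : A) (e : (ℕ →₀ K) ≃ A)
    (he : ∀ f : ℕ →₀ K, e f = f.sum fun i a => ι a * D ^ i)
    (hcomm : ∀ a : K, D * ι a = ι a * D + ι (δ a))
    (x : A) (m : ℕ) (hb : ∀ j, m < j → e.symm x j = 0) :
    (∀ j, m + 1 < j → e.symm (D * x) j = 0) ∧ e.symm (D * x) (m + 1) = e.symm x m := by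
  have key : ∀ j : ℕ, e.symm (D * x) (j + 1) = e.symm x j + δ (e.symm x (j + 1)) := by
    intro j
    rw [symm_D_mul δ ι D e he hcomm, Finsupp.add_apply, Finsupp.mapRange_apply,
      Finsupp.mapDomain_apply Nat.succ_injective]
  constructor
  · intro j hj
    obtain ⟨j', rfl⟩ : ∃ j', j = j' + 1 := ⟨j - 1, by omega⟩
    rw [key, hb j' (by omega), hb (j' + 1) (by omega), map_zero, add_zero]
  · rw [key, hb (m + 1) (by omega), map_zero, add_zero]

theorem bnd_pow (δ : K →+ K) (ι : K →+* A) (D : A) (e : (ℕ →₀ K) ≃ A)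
    (he : ∀ f : ℕ →₀ K, e f = f.sum fun i a => ι a * D ^ i)
    (hcomm : ∀ a : K, D * ι a = ι a * D + ι (δ a))
    (d : ℕ) (x : A) (m : ℕ) (hb : ∀ j, m < j → e.symm x j = 0) :
    (∀ j, m + d < j → e.symm (D ^ d * x) j = 0) ∧
      e.symm (D ^ d * x) (m + d) = e.symm x m := by
  induction d with
  | zero =>
    constructor
    · intro j hj; rw [pow_zero, one_mul]; exact hb j (by omega)
    · rw [pow_zero, one_mul, Nat.add_zero]
  | succ d ih =>
    have h1 : D ^ (d + 1) * x = D * (D ^ d * x) := by rw [pow_succ', mul_assoc]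
    have h2 := bnd_step δ ι D e he hcomm (D ^ d * x) (m + d) ih.1
    rw [h1]
    constructor
    · intro j hj
      exact h2.1 j (by omega)
    · rw [show m + (d + 1) = m + d + 1 by omega, h2.2, ih.2]

theorem ord_bnd (e : (ℕ →₀ K) ≃ A) (x : A) : ∀ j, ordOf e x < j → e.symm x j = 0 := by
  intro j hj
  by_contra h
  have hmem : j ∈ (e.symm x).support := Finsupp.mem_support_iff.mpr h
  have := Finset.le_sup (f := id) hmem
  simp only [id] at this
  rw [ordOf] at hj
  omega

theorem le_ord (e : (ℕ →₀ K) ≃ A) (x : A) (j : ℕ) (h : e.symm x j ≠ 0) : j ≤ ordOf e x := by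
  have := Finset.le_sup (f := id) (Finsupp.mem_support_iff.mpr h)
  simpa [ordOf] using this

theorem lc_ne_zero (ι : K →+* A) (D : A) (e : (ℕ →₀ K) ≃ A)
    (he : ∀ f : ℕ →₀ K, e f = f.sum fun i a => ι a * D ^ i)
    (x : A) (hx : x ≠ 0) : e.symm x (ordOf e x) ≠ 0 := by
  have h0 : e.symm x ≠ 0 := fun h => hx (by
    have := congrArg e h
    rwa [Equiv.apply_symm_apply, e_zero ι D e he] at this)
  obtain ⟨i, hi⟩ := Finsupp.ne_iff.mp h0
  simp only [Finsupp.coe_zero, Pi.zero_apply] at hi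
  have hmem : i ∈ (e.symm x).support := Finsupp.mem_support_iff.mpr hi
  have hmem' : ordOf e x ∈ (e.symm x).support := by
    have hne : (e.symm x).support.Nonempty := ⟨i, hmem⟩
    have heq : (e.symm x).support.sup id = (e.symm x).support.max' hne := by
      apply le_antisymm
      · exact Finset.sup_le fun b hb => Finset.le_max' _ _ hb
      · exact Finset.le_sup (f := id) (Finset.max'_mem _ hne)
    rw [ordOf, heq]
    exact Finset.max'_mem _ hne
  exact Finsupp.mem_support_iff.mp hmem'

theorem mul_coeff (δ : K →+ K) (ι : K →+* A) (D : A) (e : (ℕ →₀ K) ≃ A)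
    (he : ∀ f : ℕ →₀ K, e f = f.sum fun i a => ι a * D ^ i)
    (hcomm : ∀ a : K, D * ι a = ι a * D + ι (δ a))
    (Q P : A) (hQ : Q ≠ 0) :
    e.symm (Q * P) (ordOf e Q + ordOf e P) =
      e.symm Q (ordOf e Q) * e.symm P (ordOf e P) := by
  have hmul : Q * P = ∑ i ∈ (e.symm Q).support, ι (e.symm Q i) * (D ^ i * P) := by
    conv_lhs => rw [e_expand ι D e he Q, Finset.sum_mul]
    exact Finset.sum_congr rfl fun i _ => by rw [mul_assoc]
  have hsymm : e.symm (Q * P) =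
      ∑ i ∈ (e.symm Q).support, (e.symm Q i) • e.symm (D ^ i * P) := by
    rw [hmul]
    apply e.injective
    rw [Equiv.apply_symm_apply, e_sum ι D e he]
    exact Finset.sum_congr rfl fun i _ => by
      rw [e_smul ι D e he, Equiv.apply_symm_apply]
  rw [hsymm, Finset.sum_apply']
  rw [Finset.sum_eq_single (ordOf e Q)]
  · have h2 := (bnd_pow δ ι D e he hcomm (ordOf e Q) P (ordOf e P) (ord_bnd e P)).2
    rw [Finsupp.smul_apply, smul_eq_mul,
      show ordOf e Q + ordOf e P = ordOf e P + ordOf e Q by omega, h2]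
  · intro i hi hne
    have hile : i ≤ ordOf e Q := by simpa [ordOf] using Finset.le_sup (f := id) hi
    have h1 := (bnd_pow δ ι D e he hcomm i P (ordOf e P) (ord_bnd e P)).1
      (ordOf e Q + ordOf e P) (by omega)
    rw [Finsupp.smul_apply, h1, smul_zero]
  · intro h
    exact absurd (Finsupp.mem_support_iff.mpr (lc_ne_zero ι D e he Q hQ)) h

theorem mul_ne_zero' (δ : K →+ K) (ι : K →+* A) (D : A) (e : (ℕ →₀ K) ≃ A)
    (he : ∀ f : ℕ →₀ K, e f = f.sum fun i a => ι a * D ^ i)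
    (hcomm : ∀ a : K, D * ι a = ι a * D + ι (δ a))
    (Q P : A) (hQ : Q ≠ 0) (hP : P ≠ 0) : Q * P ≠ 0 := by
  intro h
  have hc := mul_coeff δ ι D e he hcomm Q P hQ
  rw [h, symm_zero ι D e he] at hc
  simp only [Finsupp.coe_zero, Pi.zero_apply] at hc
  exact (mul_ne_zero (lc_ne_zero ι D e he Q hQ) (lc_ne_zero ι D e he P hP)) hc.symm

theorem ord_le_of_mul (δ : K →+ K) (ι : K →+* A) (D : A) (e : (ℕ →₀ K) ≃ A)
    (he : ∀ f : ℕ →₀ K, e f = f.sum fun i a => ι a * D ^ i)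
    (hcomm : ∀ a : K, D * ι a = ι a * D + ι (δ a))
    (Q P : A) (hQ : Q ≠ 0) (hP : P ≠ 0) :
    ordOf e P ≤ ordOf e (Q * P) := by
  have hc := mul_coeff δ ι D e he hcomm Q P hQ
  have hne : e.symm (Q * P) (ordOf e Q + ordOf e P) ≠ 0 := by
    rw [hc]; exact mul_ne_zero (lc_ne_zero ι D e he Q hQ) (lc_ne_zero ι D e he P hP)
  have := le_ord e (Q * P) _ hne
  omega

end lems
section lems2
variable [Field K] [Ring A]

/-- the coefficient finsupp determined by a vector -/
theorem sumsingle_apply (n : ℕ) (v : Fin (n + 1) → K) (m : ℕ) :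
    (∑ j : Fin (n + 1), Finsupp.single (n - (j : ℕ)) (v j)) m =
      if m ≤ n then v ⟨n - m, by omega⟩ else 0 := by
  classical
  rw [Finset.sum_apply']
  by_cases hm : m ≤ n
  · rw [if_pos hm, Finset.sum_eq_single (⟨n - m, by omega⟩ : Fin (n + 1))]
    · rw [Finsupp.single_apply, if_pos (by simp; omega)]
    · intro b _ hb
      rw [Finsupp.single_apply, if_neg]
      intro h
      apply hb
      have hble : (b : ℕ) ≤ n := by omega
      apply Fin.ext
      simp only []
      omega
    · intro h; exact absurd (Finset.mem_univ _) h
  · rw [if_neg hm]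
    apply Finset.sum_eq_zero
    intro b _
    rw [Finsupp.single_apply, if_neg (by omega)]

theorem recon (ι : K →+* A) (D : A) (e : (ℕ →₀ K) ≃ A)
    (he : ∀ f : ℕ →₀ K, e f = f.sum fun i a => ι a * D ^ i)
    (n : ℕ) (x : A) (hb : ∀ j, n < j → e.symm x j = 0) :
    phiInv e n (phiV e n x) = x := by
  rw [phiInv]
  have : (∑ j : Fin (n + 1), Finsupp.single (n - (j : ℕ)) (phiV e n x j)) = e.symm x := by
    ext m
    rw [sumsingle_apply]
    by_cases hm : m ≤ n
    · rw [if_pos hm]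
      show e.symm x (n - (n - m)) = e.symm x m
      congr 1; omega
    · rw [if_neg hm, hb m (by omega)]
  rw [this, Equiv.apply_symm_apply]

theorem phiV_phiInv (n : ℕ) (v : Fin (n + 1) → K) (e : (ℕ →₀ K) ≃ A) :
    phiV e n (phiInv e n v) = v := by
  funext c
  rw [phiV, phiInv, Equiv.symm_apply_apply, sumsingle_apply, if_pos (by omega)]
  congr 1
  apply Fin.ext
  simp only []
  omega

theorem phiInv_eq_sum (ι : K →+* A) (D : A) (e : (ℕ →₀ K) ≃ A)
    (he : ∀ f : ℕ →₀ K, e f = f.sum fun i a => ι a * D ^ i)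
    (n : ℕ) (v : Fin (n + 1) → K) :
    phiInv e n v = ∑ j : Fin (n + 1), ι (v j) * D ^ (n - (j : ℕ)) := by
  rw [phiInv, e_sum ι D e he]
  exact Finset.sum_congr rfl fun j _ => e_single ι D e he _ _

theorem phiInv_comb (ι : K →+* A) (D : A) (e : (ℕ →₀ K) ≃ A)
    (he : ∀ f : ℕ →₀ K, e f = f.sum fun i a => ι a * D ^ i)
    (n : ℕ) {α : Type*} [Fintype α] (g : α → K) (vv : α → Fin (n + 1) → K) :
    phiInv e n (fun c => ∑ a : α, g a * vv a c) =
      ∑ a : α, ι (g a) * phiInv e n (vv a) := by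
  rw [phiInv_eq_sum ι D e he]
  have : ∀ j : Fin (n + 1), ι (∑ a : α, g a * vv a j) * D ^ (n - (j : ℕ)) =
      ∑ a : α, ι (g a) * (ι (vv a j) * D ^ (n - (j : ℕ))) := by
    intro j
    rw [map_sum, Finset.sum_mul]
    exact Finset.sum_congr rfl fun a _ => by rw [map_mul, mul_assoc]
  rw [Finset.sum_congr rfl fun j _ => this j, Finset.sum_comm]
  exact Finset.sum_congr rfl fun a _ => by
    rw [← Finset.mul_sum, phiInv_eq_sum ι D e he]

end lems2
end

/-- if `(u₁, ..., u_k, u)` is a nonzero vector in the left kernel of `M_n`,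
then `u ≠ 0` and `φ_n⁻¹(u)` is a common left multiple of the `Lᵢ` with left
cofactors `φ_{n-rᵢ}⁻¹(uᵢ)`. -/
theorem left_kernel_vector_gives_clm [Field K] [Ring A]
    (δ : K →+ K) (hLeib : ∀ a b : K, δ (a * b) = a * δ b + δ a * b)
    (ι : K →+* A) (D : A)
    (hcomm : ∀ a : K, D * ι a = ι a * D + ι (δ a))
    (e : (ℕ →₀ K) ≃ A)
    (he : ∀ f : ℕ →₀ K, e f = f.sum fun i a => ι a * D ^ i)
    {k : ℕ} (L : Fin k → A) (hL : ∀ i, L i ≠ 0)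
    (r : Fin k → ℕ) (hr : ∀ i, ordOf e (L i) = r i)
    (Lc : A) (hLc : IsLCLM e L Lc)
    (n : ℕ) (hn : ordOf e Lc ≤ n)
    (w : ((Σ i : Fin k, Fin (n - r i + 1)) ⊕ Fin (n + 1)) → K)
    (hw : w ≠ 0)
    (hker : Matrix.vecMul w (Mmat e D L r n) = 0) :
    (fun a : Fin (n + 1) => w (Sum.inr a)) ≠ 0 ∧
      ∀ i : Fin k,
        phiInv e n (fun a => w (Sum.inr a)) =
          phiInv e (n - r i) (fun a => w (Sum.inl ⟨i, a⟩)) * L i := by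
  classical
  have hrn : ∀ i, r i ≤ n := by
    intro i
    obtain ⟨⟨hLcne, hdiv⟩, _⟩ := hLc
    obtain ⟨Q, hQ⟩ := hdiv i
    have hQne : Q ≠ 0 := fun h => hLcne (by rw [hQ, h, zero_mul])
    have h1 := ord_le_of_mul δ ι D e he hcomm Q (L i) hQne (hL i)
    rw [← hQ, hr i] at h1
    omega
  have hcol : ∀ (i : Fin k) (c : Fin (n + 1)),
      w (Sum.inr c) = ∑ a : Fin (n - r i + 1),
        w (Sum.inl ⟨i, a⟩) * phiV e n (D ^ (n - r i - (a : ℕ)) * L i) c := by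
    intro i c
    have h := congrFun hker (i, c)
    simp only [Matrix.vecMul, dotProduct, Pi.zero_apply] at h
    rw [Fintype.sum_sum_type, ← Finset.univ_sigma_univ, Finset.sum_sigma] at h
    simp only [Mmat, Matrix.of_apply] at h
    have hA : ∀ i' : Fin k,
        (∑ a : Fin (n - r i' + 1), w (Sum.inl ⟨i', a⟩) *
          (if i' = i then Syl e D n (r i') (L i') a c else 0)) =
        (if i' = i then
          ∑ a : Fin (n - r i' + 1), w (Sum.inl ⟨i', a⟩) * Syl e D n (r i') (L i') a c
         else 0) := by
      intro i'
      split <;> simp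
    rw [Finset.sum_congr rfl fun i' _ => hA i', Finset.sum_ite_eq' Finset.univ i,
      if_pos (Finset.mem_univ i)] at h
    have hB : (∑ a : Fin (n + 1), w (Sum.inr a) *
        (if (a : ℕ) = (c : ℕ) then (-1 : K) else 0)) = - w (Sum.inr c) := by
      simp [Fin.val_eq_val, mul_ite, Finset.sum_ite_eq']
    rw [hB, add_neg_eq_zero] at h
    rw [← h]
    exact Finset.sum_congr rfl fun a _ => rfl
  have key : ∀ i : Fin k,
      phiInv e n (fun a => w (Sum.inr a)) =
        phiInv e (n - r i) (fun a => w (Sum.inl ⟨i, a⟩)) * L i := by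
    intro i
    have h1 : r i ≤ n := hrn i
    have hbL : ∀ j, r i < j → e.symm (L i) j = 0 := by
      intro j hj
      exact ord_bnd e (L i) j (by rw [hr i]; omega)
    have heq : (fun a : Fin (n + 1) => w (Sum.inr a)) =
        fun c => ∑ a : Fin (n - r i + 1), w (Sum.inl ⟨i, a⟩) *
          phiV e n (D ^ (n - r i - (a : ℕ)) * L i) c := funext fun c => hcol i c
    rw [heq, phiInv_comb ι D e he n (fun a => w (Sum.inl ⟨i, a⟩))
        (fun a => phiV e n (D ^ (n - r i - (a : ℕ)) * L i)),
      phiInv_eq_sum ι D e he, Finset.sum_mul]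
    apply Finset.sum_congr rfl
    intro a _
    rw [recon ι D e he n _ ?_, mul_assoc]
    intro j hj
    exact (bnd_pow δ ι D e he hcomm (n - r i - (a : ℕ)) (L i) (r i) hbL).1 j (by omega)
  refine ⟨?_, key⟩
  intro h0
  apply hw
  have hzero : phiInv e n (fun a => w (Sum.inr a)) = 0 := by
    rw [h0]
    simp only [phiInv, Pi.zero_apply, Finsupp.single_zero, Finset.sum_const_zero]
    exact e_zero ι D e he
  have hui : ∀ i : Fin k, phiInv e (n - r i) (fun a => w (Sum.inl ⟨i, a⟩)) = 0 := by
    intro i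
    by_contra hQi
    have hk := key i
    rw [hzero] at hk
    exact mul_ne_zero' δ ι D e he hcomm _ _ hQi (hL i) hk.symm
  funext row
  match row with
  | Sum.inl ⟨i, a⟩ =>
    have h2 := congrFun (phiV_phiInv (n - r i) (fun a => w (Sum.inl ⟨i, a⟩)) e) a
    rw [hui i] at h2
    rw [← h2]
    simp [phiV, symm_zero ι D e he]
  | Sum.inr a => exact congrFun h0 a
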